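/- Let w be a positive natural number and let m satisfy 2^{w−1} < m < 2^w. If J is uniformly distributed on {0, 1, …, 2^w − 1} and Y = 1 + ⌊m·J/2^w⌋, then max_{1 ≤ k ≤ m} P(Y = k) = 2 · min_{1 ≤ k ≤ m} P(Y = k): some values in {1, …, m} are exactly twice as likely as others. -/

import Mathlib

def floorMulProb (w m k : ℕ) : ℚ :=
  (((Finset.range (2 ^ w)).filter (fun j => 1 + m * j / 2 ^ w = k)).card : ℚ) / 2 ^ w

section Aux

variable (N m : ℕ)

def fmCnt (k : ℕ) : ℕ :=
  ((Finset.range N).filter (fun j => 1 + m * j / N = k)).card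

lemma fmCnt_ge_one (hmN : m < N) (hm : 0 < m) {k : ℕ} (hk1 : 1 ≤ k) (hk2 : k ≤ m) :
    1 ≤ fmCnt N m k := by
  obtain ⟨t, rfl⟩ : ∃ t, k = t + 1 := ⟨k - 1, by omega⟩
  set j := (t * N + (m - 1)) / m with hj
  have hdm : m * j + (t * N + (m - 1)) % m = t * N + (m - 1) := Nat.div_add_mod _ _
  have hr : (t * N + (m - 1)) % m < m := Nat.mod_lt _ hm
  have h1 : t * N ≤ m * j := by omega
  have h2 : m * j ≤ t * N + (m - 1) := by omega
  have h3 : m * j < (t + 1) * N := by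
    have h4 : (t + 1) * N = t * N + N := by ring
    omega
  have hdiv : m * j / N = t := Nat.div_eq_of_lt_le h1 h3
  have hjN : j < N := by
    have h5 : (t + 1) * N ≤ m * N := Nat.mul_le_mul_right N (by omega)
    exact Nat.lt_of_mul_lt_mul_left (lt_of_lt_of_le h3 h5)
  have hmem : j ∈ (Finset.range N).filter (fun j => 1 + m * j / N = t + 1) := by
    simp only [Finset.mem_filter, Finset.mem_range, hdiv]
    omega
  exact Finset.card_pos.mpr ⟨j, hmem⟩

lemma fmCnt_le_two (hmN : m < N) (hN2 : N < 2 * m) (hm : 0 < m) {k : ℕ} (hk1 : 1 ≤ k) :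
    fmCnt N m k ≤ 2 := by
  obtain ⟨t, rfl⟩ : ∃ t, k = t + 1 := ⟨k - 1, by omega⟩
  set jmin := (t * N + (m - 1)) / m with hjmin
  have hdm : m * jmin + (t * N + (m - 1)) % m = t * N + (m - 1) := Nat.div_add_mod _ _
  have hr : (t * N + (m - 1)) % m < m := Nat.mod_lt _ hm
  have hlo : t * N ≤ m * jmin := by omega
  have hhi : m * jmin ≤ t * N + (m - 1) := by omega
  have hsub : (Finset.range N).filter (fun j => 1 + m * j / N = t + 1)
      ⊆ Finset.Icc jmin (jmin + 1) := by
    intro j hj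
    simp only [Finset.mem_filter, Finset.mem_range] at hj
    have hdiv : m * j / N = t := by omega
    have hdm2 : N * (m * j / N) + m * j % N = m * j := Nat.div_add_mod _ _
    have hrj : m * j % N < N := Nat.mod_lt _ (by omega)
    rw [hdiv, mul_comm N t] at hdm2
    have l1 : t * N ≤ m * j := by omega
    have l2 : m * j < t * N + N := by omega
    have hge : jmin ≤ j := by
      by_contra hcon
      push_neg at hcon
      have h4 : m * (j + 1) ≤ m * jmin := Nat.mul_le_mul_left m hcon
      rw [Nat.mul_succ] at h4
      omega
    have hle : j ≤ jmin + 1 := by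
      by_contra hcon
      push_neg at hcon
      have h4 : m * (jmin + 2) ≤ m * j := Nat.mul_le_mul_left m hcon
      have h5 : m * (jmin + 2) = m * jmin + 2 * m := by ring
      omega
    exact Finset.mem_Icc.mpr ⟨hge, hle⟩
  calc fmCnt N m (t + 1) ≤ (Finset.Icc jmin (jmin + 1)).card := Finset.card_le_card hsub
    _ = 2 := by rw [Nat.card_Icc]; omega

lemma fmCnt_sum (hmN : m < N) (hm : 0 < m) :
    ∑ k ∈ Finset.Icc 1 m, fmCnt N m k = N := by
  have h : ∑ k ∈ Finset.Icc 1 m, fmCnt N m k = (Finset.range N).card := by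
    symm
    apply Finset.card_eq_sum_card_fiberwise
    intro j hj
    simp only [Finset.coe_range, Set.mem_Iio, Finset.mem_coe, Finset.mem_range] at hj
    have hN0 : 0 < N := by omega
    have hlt : m * j / N < m := by
      rw [Nat.div_lt_iff_lt_mul hN0]
      calc m * j ≤ m * (N - 1) := Nat.mul_le_mul_left _ (by omega)
        _ < m * N := (Nat.mul_lt_mul_left hm).mpr (by omega)
    refine Finset.mem_Icc.mpr ⟨Nat.le_add_right 1 _, ?_⟩
    beta_reduce
    omega
  rw [h, Finset.card_range]

end Aux

theorem floorMul_ratio_two_of_top_half (w m : ℕ) (hw : 0 < w)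
    (hm1 : 2 ^ (w - 1) < m) (hm2 : m < 2 ^ w) (hm : 1 ≤ m) :
    (Finset.Icc 1 m).sup' (Finset.nonempty_Icc.mpr hm) (floorMulProb w m)
        = 2 * (Finset.Icc 1 m).inf' (Finset.nonempty_Icc.mpr hm) (floorMulProb w m) ∧
      ∃ k₁ ∈ Finset.Icc 1 m, ∃ k₂ ∈ Finset.Icc 1 m,
        floorMulProb w m k₁ = 2 * floorMulProb w m k₂ := by
  set N := 2 ^ w with hNdef
  have hN2m : N < 2 * m := by
    have h : N = 2 * 2 ^ (w - 1) := by
      rw [hNdef, ← pow_succ']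
      congr 1
      omega
    omega
  have hm0 : 0 < m := hm
  have hprob : ∀ k, floorMulProb w m k = (fmCnt N m k : ℚ) / N := by
    intro k
    simp [floorMulProb, fmCnt, hNdef]
  have hNQ : (0 : ℚ) < (N : ℚ) := by positivity
  have hex2 : ∃ k ∈ Finset.Icc 1 m, fmCnt N m k = 2 := by
    by_contra h
    push_neg at h
    have hle : ∀ k ∈ Finset.Icc 1 m, fmCnt N m k ≤ 1 := by
      intro k hk
      have h1 := fmCnt_le_two N m hm2 hN2m hm0 (Finset.mem_Icc.mp hk).1
      have := h k hk
      omega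
    have hb := Finset.sum_le_card_nsmul (Finset.Icc 1 m) (fmCnt N m) 1 hle
    rw [fmCnt_sum N m hm2 hm0] at hb
    simp [Nat.card_Icc] at hb
    omega
  have hex1 : ∃ k ∈ Finset.Icc 1 m, fmCnt N m k = 1 := by
    by_contra h
    push_neg at h
    have heq : ∀ k ∈ Finset.Icc 1 m, fmCnt N m k = 2 := by
      intro k hk
      obtain ⟨hk1, hk2⟩ := Finset.mem_Icc.mp hk
      have h1 := fmCnt_le_two N m hm2 hN2m hm0 hk1
      have h2 := fmCnt_ge_one N m hm2 hm0 hk1 hk2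
      have := h k hk
      omega
    have hb := Finset.sum_congr rfl heq
    rw [fmCnt_sum N m hm2 hm0] at hb
    simp [Nat.card_Icc] at hb
    omega
  obtain ⟨k₁, hk₁, hc₁⟩ := hex2
  obtain ⟨k₂, hk₂, hc₂⟩ := hex1
  have hp1 : floorMulProb w m k₁ = 2 / N := by rw [hprob, hc₁]; norm_num
  have hp2 : floorMulProb w m k₂ = 1 / N := by rw [hprob, hc₂]; norm_num
  have hsup : (Finset.Icc 1 m).sup' (Finset.nonempty_Icc.mpr hm) (floorMulProb w m) = 2 / N := by
    apply le_antisymm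
    · apply Finset.sup'_le
      intro k hk
      rw [hprob]
      have h2 := fmCnt_le_two N m hm2 hN2m hm0 (Finset.mem_Icc.mp hk).1
      have h2' : (fmCnt N m k : ℚ) ≤ 2 := by exact_mod_cast h2
      exact (div_le_div_iff_of_pos_right hNQ).mpr h2'
    · rw [← hp1]
      exact Finset.le_sup' _ hk₁
  have hinf : (Finset.Icc 1 m).inf' (Finset.nonempty_Icc.mpr hm) (floorMulProb w m) = 1 / N := by
    apply le_antisymm
    · rw [← hp2]
      exact Finset.inf'_le _ hk₂
    · apply Finset.le_inf'
      intro k hk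
      rw [hprob]
      obtain ⟨hk1, hk2⟩ := Finset.mem_Icc.mp hk
      have h1 := fmCnt_ge_one N m hm2 hm0 hk1 hk2
      have h1' : (1 : ℚ) ≤ (fmCnt N m k : ℚ) := by exact_mod_cast h1
      exact (div_le_div_iff_of_pos_right hNQ).mpr h1'
  refine ⟨?_, k₁, hk₁, k₂, hk₂, ?_⟩
  · rw [hsup, hinf]; ring
  · rw [hp1, hp2]; ring
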